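/- If μ is a self-modulating modulus of M, then μ^f(φ)(n,q') := ⋃_{i ≤ n, ∀ j < i: M(φ)(j,q') = none} μ(φ)(i,q') is a self-modulating modulus of the monotonized machine M^f, and μ^f terminates with M^f (once M^f(φ)(n,q') returns some value, μ^f(φ)(m,q') = μ^f(φ)(n,q') for all m ≥ n). -/

import Mathlib

open scoped Classical

/-- `φ` and `ψ` agree on all questions in the list `L`. -/
def agreeOn {Q A : Type*} (φ ψ : Q → A) (L : List Q) : Prop :=
  ∀ q ∈ L, φ q = ψ q

/-- The 'use first' monotonization of a machine. -/
noncomputable def useFirst {Q A Q' A' : Type*}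
    (M : (Q → A) → (ℕ × Q' → Option A')) :
    (Q → A) → (ℕ × Q' → Option A') :=
  fun φ p =>
    if h : ∃ m, m ≤ p.1 ∧ M φ (m, p.2) ≠ none then M φ (Nat.find h, p.2)
    else none

/-- The 'use first' modulus: the union of the values `μ φ (i, q')` over all efforts
`i ≤ n` such that `M` returns `none` for all smaller efforts. -/
noncomputable def useFirstMod {Q A Q' A' : Type*}
    (M : (Q → A) → (ℕ × Q' → Option A'))
    (μ : (Q → A) → ℕ × Q' → List Q) :
    (Q → A) → ℕ × Q' → List Q :=
  fun φ p =>
    ((List.range (p.1 + 1)).filter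
      (fun i => decide (∀ j < i, M φ (j, p.2) = none))).flatMap
      (fun i => μ φ (i, p.2))

section Aux
variable {Q A Q' A' : Type*}
  {M : (Q → A) → (ℕ × Q' → Option A')}
  {μ : (Q → A) → ℕ × Q' → List Q}

lemma mem_useFirstMod {φ : Q → A} {p : ℕ × Q'} {q : Q} :
    q ∈ useFirstMod M μ φ p ↔
      ∃ i ≤ p.1, (∀ j < i, M φ (j, p.2) = none) ∧ q ∈ μ φ (i, p.2) := by
  simp [useFirstMod, List.mem_flatMap, List.mem_filter, List.mem_range, Nat.lt_succ_iff]
  tauto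

lemma keyA
    (hmod : ∀ (φ ψ : Q → A) (p : ℕ × Q'), agreeOn φ ψ (μ φ p) → M φ p = M ψ p)
    (hself : ∀ (φ ψ : Q → A) (p : ℕ × Q'), agreeOn φ ψ (μ φ p) → μ φ p = μ ψ p)
    {φ ψ : Q → A} {n : ℕ} {q' : Q'}
    (hag : agreeOn φ ψ (useFirstMod M μ φ (n, q'))) :
    ∀ i ≤ n, (∀ j < i, M φ (j, q') = none) →
      M φ (i, q') = M ψ (i, q') ∧ μ φ (i, q') = μ ψ (i, q') := by
  intro i hi hcond
  have hsub : agreeOn φ ψ (μ φ (i, q')) := fun q hq =>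
    hag q (mem_useFirstMod.mpr ⟨i, hi, hcond, hq⟩)
  exact ⟨hmod φ ψ _ hsub, hself φ ψ _ hsub⟩

lemma condIff
    (hmod : ∀ (φ ψ : Q → A) (p : ℕ × Q'), agreeOn φ ψ (μ φ p) → M φ p = M ψ p)
    (hself : ∀ (φ ψ : Q → A) (p : ℕ × Q'), agreeOn φ ψ (μ φ p) → μ φ p = μ ψ p)
    {φ ψ : Q → A} {n : ℕ} {q' : Q'}
    (hag : agreeOn φ ψ (useFirstMod M μ φ (n, q'))) :
    ∀ i ≤ n + 1,
      ((∀ j < i, M φ (j, q') = none) ↔ (∀ j < i, M ψ (j, q') = none)) := by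
  intro i
  induction i using Nat.strong_induction_on with
  | _ i ih =>
    intro hi
    constructor
    · intro h j hj
      have := keyA hmod hself hag j (by omega) (fun k hk => h k (hk.trans hj))
      rw [← this.1]; exact h j hj
    · intro h j hj
      have hψj : ∀ k < j, M ψ (k, q') = none := fun k hk => h k (hk.trans hj)
      have hφj : ∀ k < j, M φ (k, q') = none := (ih j hj (by omega)).mpr hψj
      have := keyA hmod hself hag j (by omega) hφj
      rw [this.1]; exact h j hj

lemma flatMap_congr {α β : Type*} {l : List α} {f g : α → List β}
    (h : ∀ a ∈ l, f a = g a) : l.flatMap f = l.flatMap g := by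
  induction l with
  | nil => rfl
  | cons a l ih =>
    simp only [List.flatMap_cons, h a List.mem_cons_self,
      ih (fun b hb => h b (List.mem_cons_of_mem _ hb))]

end Aux

/-- If `μ` is a self-modulating modulus of `M`, then `useFirstMod M μ` is a
self-modulating modulus of the monotonized machine `useFirst M`, and it terminates
with `useFirst M`. -/
theorem useFirstMod_correct {Q A Q' A' : Type*}
    (M : (Q → A) → (ℕ × Q' → Option A'))
    (μ : (Q → A) → ℕ × Q' → List Q)
    (hmod : ∀ (φ ψ : Q → A) (p : ℕ × Q'), agreeOn φ ψ (μ φ p) → M φ p = M ψ p)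
    (hself : ∀ (φ ψ : Q → A) (p : ℕ × Q'), agreeOn φ ψ (μ φ p) → μ φ p = μ ψ p) :
    (∀ (φ ψ : Q → A) (p : ℕ × Q'),
      agreeOn φ ψ (useFirstMod M μ φ p) → useFirst M φ p = useFirst M ψ p) ∧
    (∀ (φ ψ : Q → A) (p : ℕ × Q'),
      agreeOn φ ψ (useFirstMod M μ φ p) → useFirstMod M μ φ p = useFirstMod M μ ψ p) ∧
    (∀ (φ : Q → A) (n : ℕ) (q' : Q'), useFirst M φ (n, q') ≠ none →
      ∀ m, n ≤ m → useFirstMod M μ φ (m, q') = useFirstMod M μ φ (n, q')) := by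
  refine ⟨?_, ?_, ?_⟩
  · -- part 1
    rintro φ ψ ⟨n, q'⟩ hag
    by_cases h : ∃ m, m ≤ n ∧ M φ (m, q') ≠ none
    · obtain ⟨hm₀le, hm₀ne⟩ := Nat.find_spec h
      set m₀ := Nat.find h with hm₀
      have hcond : ∀ j < m₀, M φ (j, q') = none := by
        intro j hj
        by_contra hne
        exact Nat.find_min h hj ⟨by omega, hne⟩
      have hA := keyA hmod hself hag m₀ hm₀le hcond
      have hψ : ∃ m, m ≤ n ∧ M ψ (m, q') ≠ none :=
        ⟨m₀, hm₀le, by rw [← hA.1]; exact hm₀ne⟩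
      have hfind : Nat.find hψ = m₀ := by
        rw [Nat.find_eq_iff]
        refine ⟨⟨hm₀le, by rw [← hA.1]; exact hm₀ne⟩, ?_⟩
        intro j hj
        push_neg
        intro hjn
        have hφj : ∀ k < j, M φ (k, q') = none := fun k hk => hcond k (hk.trans hj)
        have := keyA hmod hself hag j (by omega) hφj
        rw [← this.1]
        exact hcond j hj
      simp only [useFirst]
      rw [dif_pos h, dif_pos hψ, hfind, ← hm₀]
      exact hA.1
    · push_neg at h
      have hψnone : ∀ i ≤ n, M ψ (i, q') = none := by
        intro i hi
        have := keyA hmod hself hag i hi (fun k hk => h k (by omega))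
        rw [← this.1]; exact h i hi
      simp only [useFirst]
      rw [dif_neg (by push_neg; exact h), dif_neg (by push_neg; exact hψnone)]
  · -- part 2
    rintro φ ψ ⟨n, q'⟩ hag
    have hiff := condIff hmod hself hag
    have hfilter : (List.range (n+1)).filter
          (fun i => decide (∀ j < i, M φ (j, q') = none))
        = (List.range (n+1)).filter
          (fun i => decide (∀ j < i, M ψ (j, q') = none)) := by
      apply List.filter_congr
      intro i hi
      simp only [List.mem_range] at hi
      simp only [decide_eq_decide]
      exact hiff i (by omega)
    show ((List.range (n+1)).filter _).flatMap _ = ((List.range (n+1)).filter _).flatMap _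
    rw [← hfilter]
    apply flatMap_congr
    intro i hi
    simp only [List.mem_filter, List.mem_range, decide_eq_true_eq] at hi
    exact (keyA hmod hself hag i (by omega) hi.2).2
  · -- part 3
    intro φ n q' hne m hm
    have h : ∃ k, k ≤ n ∧ M φ (k, q') ≠ none := by
      by_contra hc
      simp only [useFirst] at hne
      rw [dif_neg hc] at hne
      exact hne rfl
    obtain ⟨hk₀n, hk₀ne⟩ := Nat.find_spec h
    set k₀ := Nat.find h
    have hsplit : List.range (m+1)
        = List.range (n+1) ++ (List.range (m - n)).map ((n+1) + ·) := by
      rw [← List.range_add]; congr 1; omega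
    show ((List.range (m+1)).filter _).flatMap _ = _
    rw [hsplit, List.filter_append, List.flatMap_append]
    have hnil : ((List.range (m-n)).map ((n+1) + ·)).filter
        (fun i => decide (∀ j < i, M φ (j, q') = none)) = [] := by
      rw [List.filter_eq_nil_iff]
      intro a ha
      simp only [List.mem_map, List.mem_range] at ha
      obtain ⟨x, hx, rfl⟩ := ha
      simp only [decide_eq_true_eq, not_forall]
      exact ⟨k₀, by omega, hk₀ne⟩
    rw [hnil, List.flatMap_nil, List.append_nil]
    rfl
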